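/- Let g be a standard Gaussian random variable and let f : ℝ → ℝ be a C^∞ function all of whose derivatives of every order are bounded. Then for every integer k ≥ 0, E( f(g) · He_k(g) ) = E( f^{(k)}(g) ), where He_k is the k-th probabilists' Hermite polynomial and f^{(k)} is the k-th derivative of f. -/

import Mathlib

open MeasureTheory ProbabilityTheory

open Polynomial Real

noncomputable section

lemma integrable_pow_gauss (n : ℕ) :
    Integrable (fun x : ℝ => x ^ n * Real.exp (-(x^2/2))) := by
  have h := integrable_rpow_mul_exp_neg_mul_sq (b := (1:ℝ)/2) (by norm_num) (s := (n:ℝ))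
    (lt_of_lt_of_le neg_one_lt_zero (Nat.cast_nonneg n))
  simp_rw [Real.rpow_natCast] at h
  have e : ∀ x : ℝ, -(x^2/2) = -(1/2 : ℝ) * x^2 := fun x => by ring
  simp_rw [e]
  exact h

lemma integrable_poly_gauss (p : ℝ[X]) :
    Integrable (fun x : ℝ => p.eval x * Real.exp (-(x^2/2))) := by
  induction p using Polynomial.induction_on' with
  | add p q hp hq => simp only [Polynomial.eval_add, add_mul]; exact hp.add hq
  | monomial n a =>
      simpa [Polynomial.eval_monomial, mul_assoc] using (integrable_pow_gauss n).const_mul a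

lemma integrable_linGrowth_poly_gauss {f : ℝ → ℝ} (hf : Continuous f) {C : ℝ}
    (hC : ∀ x, |f x| ≤ C * (1 + |x|)) (p : ℝ[X]) :
    Integrable (fun x : ℝ => f x * (p.eval x * Real.exp (-(x^2/2)))) := by
  have hint : Integrable (fun x : ℝ =>
      C * (|p.eval x * Real.exp (-(x^2/2))| + |(X * p).eval x * Real.exp (-(x^2/2))|)) :=
    (((integrable_poly_gauss p).abs.add (integrable_poly_gauss (X * p)).abs).const_mul C)
  apply hint.mono' ?_ ?_
  · exact (hf.mul (p.continuous.mul (Real.continuous_exp.comp (by continuity)))).aestronglyMeasurable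
  · filter_upwards with x
    rw [Real.norm_eq_abs, abs_mul]
    have h2 : |f x| * |p.eval x * Real.exp (-(x^2/2))| ≤
        (C * (1 + |x|)) * |p.eval x * Real.exp (-(x^2/2))| :=
      mul_le_mul_of_nonneg_right (hC x) (abs_nonneg _)
    refine h2.trans (le_of_eq ?_)
    have h3 : |(X * p).eval x * Real.exp (-(x^2/2))| = |x| * |p.eval x * Real.exp (-(x^2/2))| := by
      rw [Polynomial.eval_mul, Polynomial.eval_X, mul_assoc, abs_mul]
    rw [h3]; ring

/-- real Hermite polynomial -/
def H (k : ℕ) : ℝ[X] := (hermite k).map (Int.castRingHom ℝ)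

lemma H_succ (k : ℕ) : H (k+1) = X * H k - derivative (H k) := by
  unfold H
  rw [hermite_succ]
  simp [Polynomial.derivative_map]

lemma aeval_hermite_eq (k : ℕ) (x : ℝ) : (Polynomial.aeval x) (hermite k) = (H k).eval x := by
  rw [Polynomial.aeval_def, Polynomial.eval₂_eq_eval_map]; rfl

lemma hasDerivAt_hermite_gauss (k : ℕ) (x : ℝ) :
    HasDerivAt (fun y : ℝ => (H k).eval y * Real.exp (-(y^2/2)))
      (-((H (k+1)).eval x * Real.exp (-(x^2/2)))) x := by
  have h1 : HasDerivAt (fun y : ℝ => (H k).eval y)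
      ((derivative (H k)).eval x) x := (H k).hasDerivAt x
  have h2 : HasDerivAt (fun y : ℝ => Real.exp (-(y^2/2))) (-x * Real.exp (-(x^2/2))) x := by
    have : HasDerivAt (fun y : ℝ => -(y^2/2)) (-x) x := by
      have := ((hasDerivAt_pow 2 x).div_const 2).neg
      refine this.congr_deriv ?_
      norm_num
    simpa [mul_comm] using this.exp
  have := h1.mul h2
  refine this.congr_deriv ?_
  have hs : (H (k+1)).eval x = x * (H k).eval x - (derivative (H k)).eval x := by
    rw [H_succ]; simp
  rw [hs]; ring

/-- Single integration by parts step. -/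
lemma ibp_step {f : ℝ → ℝ} (hf : ContDiff ℝ (⊤ : ℕ∞) f) {C : ℝ}
    (hC : ∀ x, |f x| ≤ C * (1 + |x|)) {M : ℝ} (hM : ∀ x, |deriv f x| ≤ M) (k : ℕ) :
    ∫ x : ℝ, f x * ((H (k+1)).eval x * Real.exp (-(x^2/2)))
      = ∫ x : ℝ, deriv f x * ((H k).eval x * Real.exp (-(x^2/2))) := by
  have hf' : Continuous f := hf.continuous
  have hd : Continuous (deriv f) := (hf.iterate_deriv 1).continuous
  have hMd : ∀ x, |deriv f x| ≤ (max M 0) * (1 + |x|) := by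
    intro x
    calc |deriv f x| ≤ M := hM x
    _ ≤ max M 0 := le_max_left _ _
    _ ≤ (max M 0) * (1 + |x|) := by nlinarith [abs_nonneg x, le_max_right M 0]
  have h1 : Integrable (fun x : ℝ => -(f x * ((H (k+1)).eval x * Real.exp (-(x^2/2))))) :=
    (integrable_linGrowth_poly_gauss hf' hC (H (k+1))).neg
  have h2 : Integrable (fun x : ℝ => deriv f x * ((H k).eval x * Real.exp (-(x^2/2)))) :=
    integrable_linGrowth_poly_gauss hd hMd (H k)
  have h3 : Integrable (fun x : ℝ => f x * ((H k).eval x * Real.exp (-(x^2/2)))) :=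
    integrable_linGrowth_poly_gauss hf' hC (H k)
  have key := integral_mul_deriv_eq_deriv_mul_of_integrable
    (u := f) (u' := deriv f)
    (v := fun x : ℝ => (H k).eval x * Real.exp (-(x^2/2)))
    (v' := fun x : ℝ => -((H (k+1)).eval x * Real.exp (-(x^2/2))))
    (fun x _ => (hf.differentiable (by simp)).differentiableAt.hasDerivAt)
    (fun x _ => hasDerivAt_hermite_gauss k x) (by simpa [Pi.mul_def, mul_neg] using h1)
    (by simpa [Pi.mul_def] using h2) (by simpa [Pi.mul_def] using h3)
  have := key
  simp only [mul_neg] at this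
  rw [integral_neg] at this
  linarith [this]


lemma linGrowth_of_deriv_bdd {f : ℝ → ℝ} (hf : ContDiff ℝ (⊤ : ℕ∞) f) {M : ℝ}
    (hM : ∀ x, |deriv f x| ≤ M) :
    ∀ x, |f x| ≤ (|f 0| + max M 0) * (1 + |x|) := by
  intro x
  have hdiff : Differentiable ℝ f := hf.differentiable (by simp)
  have hlip : LipschitzWith M.toNNReal f := by
    apply lipschitzWith_of_nnnorm_deriv_le hdiff
    intro x
    rw [← NNReal.coe_le_coe, coe_nnnorm, Real.norm_eq_abs, Real.coe_toNNReal']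
    exact (hM x).trans (le_max_left _ _)
  have h0 := hlip.dist_le_mul x 0
  simp only [Real.dist_eq, sub_zero, Real.coe_toNNReal'] at h0
  have : |f x| ≤ |f 0| + max M 0 * |x| := by
    calc |f x| ≤ |f x - f 0| + |f 0| := by
          have := abs_sub_abs_le_abs_sub (f x) (f 0); linarith [abs_sub_abs_le_abs_sub (f x) (f 0)]
    _ ≤ max M 0 * |x| + |f 0| := by linarith
    _ = |f 0| + max M 0 * |x| := by ring
  nlinarith [abs_nonneg (f 0), abs_nonneg x, le_max_right M 0]

lemma main_aux : ∀ (k : ℕ) (f : ℝ → ℝ), ContDiff ℝ (⊤ : ℕ∞) f →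
    (∀ j : ℕ, 1 ≤ j → ∃ M : ℝ, ∀ x : ℝ, |iteratedDeriv j f x| ≤ M) →
    ∫ x : ℝ, f x * ((H k).eval x * Real.exp (-(x^2/2)))
      = ∫ x : ℝ, iteratedDeriv k f x * Real.exp (-(x^2/2)) := by
  intro k
  induction k with
  | zero =>
      intro f hf hbdd
      have : H 0 = 1 := by unfold H; simp [hermite_zero]
      simp [this, iteratedDeriv_zero]
  | succ k ih =>
      intro f hf hbdd
      obtain ⟨M, hM⟩ := hbdd 1 le_rfl
      rw [iteratedDeriv_one] at hM
      have hC := linGrowth_of_deriv_bdd hf hM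
      have step := ibp_step hf hC hM k
      rw [step]
      have hdc : ContDiff ℝ (⊤ : ℕ∞) (deriv f) := by
        have := hf.iterate_deriv 1
        simpa using this
      have hdb : ∀ j : ℕ, 1 ≤ j → ∃ M : ℝ, ∀ x : ℝ, |iteratedDeriv j (deriv f) x| ≤ M := by
        intro j hj
        obtain ⟨M', hM'⟩ := hbdd (j+1) (by omega)
        exact ⟨M', fun x => by rw [← iteratedDeriv_succ']; exact hM' x⟩
      rw [ih (deriv f) hdc hdb, ← iteratedDeriv_succ']


lemma integral_gaussianReal_eq (h : ℝ → ℝ) :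
    ∫ x, h x ∂(gaussianReal 0 1)
      = ∫ x : ℝ, h x * ((Real.sqrt (2 * π))⁻¹ * Real.exp (-(x^2/2))) := by
  rw [gaussianReal_of_var_ne_zero 0 one_ne_zero]
  have hpdf : gaussianPDF 0 1 = fun x => ((gaussianPDFReal 0 1 x).toNNReal : ENNReal) := by
    funext x; rw [gaussianPDF_def]; rfl
  rw [hpdf, integral_withDensity_eq_integral_smul
    ((measurable_gaussianPDFReal 0 1).real_toNNReal)]
  congr 1
  funext x
  rw [NNReal.smul_def, Real.coe_toNNReal _ (gaussianPDFReal_nonneg 0 1 x)]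
  have : gaussianPDFReal 0 1 x = (Real.sqrt (2 * π))⁻¹ * Real.exp (-(x^2/2)) := by
    simp only [gaussianPDFReal, NNReal.coe_one, mul_one, sub_zero]
    ring_nf
  rw [this, smul_eq_mul]; ring


/-- Gaussian integration by parts against Hermite polynomials.
If `g` is a standard Gaussian and `f : ℝ → ℝ` is `C^∞` with all derivatives of every
order bounded, then for every `k ≥ 0`, `E(f(g)·He_k(g)) = E(f^{(k)}(g))`, where `He_k`
is the `k`-th probabilists' Hermite polynomial. -/
theorem gaussian_hermite_integration_by_parts (f : ℝ → ℝ)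
    (hf : ContDiff ℝ (⊤ : ℕ∞) f)
    (hbdd : ∀ k : ℕ, 1 ≤ k → ∃ M : ℝ, ∀ x : ℝ, |iteratedDeriv k f x| ≤ M)
    (k : ℕ) :
    ∫ x, f x * (Polynomial.aeval x) (Polynomial.hermite k) ∂(gaussianReal 0 1)
      = ∫ x, iteratedDeriv k f x ∂(gaussianReal 0 1) := by
  rw [integral_gaussianReal_eq, integral_gaussianReal_eq]
  have e1 : ∀ x : ℝ, f x * (Polynomial.aeval x) (Polynomial.hermite k)
      * ((Real.sqrt (2 * π))⁻¹ * Real.exp (-(x^2/2)))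
      = (Real.sqrt (2 * π))⁻¹ * (f x * ((H k).eval x * Real.exp (-(x^2/2)))) := by
    intro x; rw [aeval_hermite_eq]; ring
  have e2 : ∀ x : ℝ, iteratedDeriv k f x * ((Real.sqrt (2 * π))⁻¹ * Real.exp (-(x^2/2)))
      = (Real.sqrt (2 * π))⁻¹ * (iteratedDeriv k f x * Real.exp (-(x^2/2))) := by
    intro x; ring
  simp_rw [e1, e2, integral_const_mul]
  rw [main_aux k f hf hbdd]


end
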